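/- Define Φ ∈ ℚ(s) by Φ(s) = 1 − 2/(s+1) − 1/(2s+1) − 1/(4s+1) + (−1 + 3/(s+1))·(1/(3s+2)) + (−1 + 1/(s+1) + 1/(2s+1) + 1/(4s+1))·(1/(7s+2)) + (2/(s+1))·(1/(2s+1) + 1/(4s+1)). Then Φ is defined at s = −1/3 and Φ(−1/3) = 0; consequently the rational function Z(s) = Φ(s)/(9s+3) has no pole at s = −1/3. (Example A.1 of the Appendix: for the non-reduced arrangement f = xy(x−y)z²(x−z)⁴ in ℂ³, with n = 3 and d = 9, the candidate pole −n/d = −1/3 of the topological local zeta function cancels.) -/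

import Mathlib

open Polynomial

/-- The order of a rational function `Z ∈ ℚ(s)` at a point `α ∈ ℚ`: the integer `k`
such that `Z = (s-α)^k · (u/v)` with `u`, `v` not vanishing at `α`. -/
noncomputable def orderAt (Z : RatFunc ℚ) (α : ℚ) : ℤ :=
  (rootMultiplicity α Z.num : ℤ) - (rootMultiplicity α Z.denom : ℤ)

local notation "X" => (RatFunc.X : RatFunc ℚ)

private noncomputable def Ppoly : ℚ[X] :=
  168 * Polynomial.X ^ 5 - 88 * Polynomial.X ^ 4 - 111 * Polynomial.X ^ 3
    + 87 * Polynomial.X ^ 2 + 72 * Polynomial.X + 12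

private noncomputable def Qpoly : ℚ[X] :=
  (Polynomial.X + 1) * (2 * Polynomial.X + 1) * (4 * Polynomial.X + 1)
    * (3 * Polynomial.X + 2) * (7 * Polynomial.X + 2)

private lemma Qpoly_eval : Qpoly.eval (-1/3) = 2/81 := by
  simp only [Qpoly, eval_mul, eval_add, eval_X, eval_one, eval_ofNat]
  norm_num

private lemma Ppoly_eval : Ppoly.eval (-1/3) = 0 := by
  simp only [Ppoly, eval_add, eval_sub, eval_mul, eval_pow, eval_X, eval_ofNat]
  norm_num

private lemma Ppoly_ne : Ppoly ≠ 0 := by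
  intro h
  have := congrArg (Polynomial.eval 0) h
  simp [Ppoly] at this

private noncomputable def Q2poly : ℚ[X] := Qpoly * (9 * Polynomial.X + 3)

private lemma Qpoly_ne : Qpoly ≠ 0 := by
  intro h
  have h2 := congrArg (Polynomial.eval (-1/3 : ℚ)) h
  rw [Qpoly_eval] at h2
  norm_num at h2

/-- Example A.1 of the Appendix (for `f = xy(x-y)z²(x-z)⁴`, `n = 3`, `d = 9`): the rational
function `Φ` is defined at `s = -1/3` with `Φ(-1/3) = 0`, hence `Z(s) = Φ(s)/(9s+3)` has no
pole at `s = -1/3`, i.e. the candidate pole `-n/d = -1/3` cancels. -/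
theorem statement14 (Φ Z : RatFunc ℚ)
    (hΦ : Φ = 1 - 2 / (X + 1) - 1 / (2 * X + 1) - 1 / (4 * X + 1)
      + (-1 + 3 / (X + 1)) * (1 / (3 * X + 2))
      + (-1 + 1 / (X + 1) + 1 / (2 * X + 1) + 1 / (4 * X + 1)) * (1 / (7 * X + 2))
      + (2 / (X + 1)) * (1 / (2 * X + 1) + 1 / (4 * X + 1)))
    (hZ : Z = Φ / (9 * X + 3)) :
    Φ.denom.eval (-1/3) ≠ 0 ∧ RatFunc.eval (RingHom.id ℚ) (-1/3) Φ = 0 ∧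
      0 ≤ orderAt Z (-1/3) := by
  have map_ne : ∀ p : ℚ[X], p.eval (-1/3 : ℚ) ≠ 0 →
      (algebraMap ℚ[X] (RatFunc ℚ)) p ≠ 0 := by
    intro p hp
    exact RatFunc.algebraMap_ne_zero (fun h => hp (by rw [h]; simp))
  have hA : (X + 1 : RatFunc ℚ) ≠ 0 := by
    have := map_ne (Polynomial.X + 1) (by norm_num)
    simpa [map_ofNat] using this
  have hB : (2 * X + 1 : RatFunc ℚ) ≠ 0 := by
    have := map_ne (2 * Polynomial.X + 1) (by norm_num)
    simpa [map_ofNat] using this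
  have hC : (4 * X + 1 : RatFunc ℚ) ≠ 0 := by
    have := map_ne (4 * Polynomial.X + 1) (by norm_num)
    simpa [map_ofNat] using this
  have hD : (3 * X + 2 : RatFunc ℚ) ≠ 0 := by
    have := map_ne (3 * Polynomial.X + 2) (by norm_num)
    simpa [map_ofNat] using this
  have hE : (7 * X + 2 : RatFunc ℚ) ≠ 0 := by
    have := map_ne (7 * Polynomial.X + 2) (by norm_num)
    simpa [map_ofNat] using this
  have hQmap : (algebraMap ℚ[X] (RatFunc ℚ)) Qpoly
      = (X + 1) * (2 * X + 1) * (4 * X + 1) * (3 * X + 2) * (7 * X + 2) := by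
    simp [Qpoly, map_ofNat]
  have hPmap : (algebraMap ℚ[X] (RatFunc ℚ)) Ppoly
      = 168 * X ^ 5 - 88 * X ^ 4 - 111 * X ^ 3 + 87 * X ^ 2 + 72 * X + 12 := by
    simp [Ppoly, map_ofNat]
  have hΦ' : Φ = (algebraMap ℚ[X] (RatFunc ℚ)) Ppoly / (algebraMap ℚ[X] (RatFunc ℚ)) Qpoly := by
    rw [hPmap, hQmap, eq_div_iff (mul_ne_zero (mul_ne_zero (mul_ne_zero (mul_ne_zero hA hB) hC) hD) hE)]
    rw [hΦ]
    field_simp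
    have hC' : (X * 4 + 1 : RatFunc ℚ) ≠ 0 := by rwa [mul_comm]
    have hD' : (X * 3 + 2 : RatFunc ℚ) ≠ 0 := by rwa [mul_comm]
    have hE' : (X * 7 + 2 : RatFunc ℚ) ≠ 0 := by rwa [mul_comm]
    field_simp
    ring
  -- denom divides Qpoly
  have hdvd : Φ.denom ∣ Qpoly := (RatFunc.denom_dvd Qpoly_ne).mpr ⟨Ppoly, hΦ'⟩
  have hden : Φ.denom.eval (-1/3) ≠ 0 := by
    obtain ⟨c, hc⟩ := hdvd
    intro h0
    have := congrArg (Polynomial.eval (-1/3 : ℚ)) hc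
    rw [Qpoly_eval, Polynomial.eval_mul, h0, zero_mul] at this
    norm_num at this
  refine ⟨hden, ?_, ?_⟩
  · -- evaluation is zero
    have key : Φ.num * Qpoly = Φ.denom * Ppoly := by
      apply RatFunc.algebraMap_injective ℚ
      rw [map_mul, map_mul]
      have h2 : algebraMap ℚ[X] (RatFunc ℚ) Φ.num / algebraMap ℚ[X] (RatFunc ℚ) Φ.denom
          = algebraMap ℚ[X] (RatFunc ℚ) Ppoly / algebraMap ℚ[X] (RatFunc ℚ) Qpoly := by
        rw [RatFunc.num_div_denom]; exact hΦ'
      rw [div_eq_div_iff (RatFunc.algebraMap_ne_zero (RatFunc.denom_ne_zero Φ))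
        (RatFunc.algebraMap_ne_zero Qpoly_ne)] at h2
      exact h2.trans (mul_comm _ _)
    have keyev := congrArg (Polynomial.eval (-1/3 : ℚ)) key
    rw [Polynomial.eval_mul, Polynomial.eval_mul, Qpoly_eval, Ppoly_eval, mul_zero] at keyev
    have hnum : Φ.num.eval (-1/3) = 0 := by
      have : Φ.num.eval (-1/3) * (2/81 : ℚ) = 0 := keyev
      simpa [map_ofNat] using this
    rw [RatFunc.eval]
    show Φ.num.eval (-1/3) / Φ.denom.eval (-1/3) = 0
    rw [hnum, zero_div]
  · -- order at -1/3 is nonnegative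
    have hQ'def : Q2poly = Qpoly * (9 * Polynomial.X + 3) := rfl
    have h93 : (9 * Polynomial.X + 3 : ℚ[X]) ≠ 0 := by
      intro h
      have := congrArg (Polynomial.eval 0) h
      simp at this
    have hQ2ne : Q2poly ≠ 0 := mul_ne_zero Qpoly_ne h93
    have hZ' : Z = (algebraMap ℚ[X] (RatFunc ℚ)) Ppoly / (algebraMap ℚ[X] (RatFunc ℚ)) Q2poly := by
      rw [hZ, hΦ', hQ'def, map_mul, div_div]
      congr 1
      simp [map_ofNat]
    have hZne : Z ≠ 0 := by
      rw [hZ']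
      exact div_ne_zero (RatFunc.algebraMap_ne_zero Ppoly_ne) (RatFunc.algebraMap_ne_zero hQ2ne)
    have key : Z.num * Q2poly = Z.denom * Ppoly := by
      apply RatFunc.algebraMap_injective ℚ
      rw [map_mul, map_mul]
      have h2 : algebraMap ℚ[X] (RatFunc ℚ) Z.num / algebraMap ℚ[X] (RatFunc ℚ) Z.denom
          = algebraMap ℚ[X] (RatFunc ℚ) Ppoly / algebraMap ℚ[X] (RatFunc ℚ) Q2poly := by
        rw [RatFunc.num_div_denom]; exact hZ'
      rw [div_eq_div_iff (RatFunc.algebraMap_ne_zero (RatFunc.denom_ne_zero Z))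
        (RatFunc.algebraMap_ne_zero hQ2ne)] at h2
      exact h2.trans (mul_comm _ _)
    have hnumne : Z.num ≠ 0 := RatFunc.num_ne_zero hZne
    have hmul := congrArg (rootMultiplicity (-1/3 : ℚ)) key
    rw [Polynomial.rootMultiplicity_mul (mul_ne_zero hnumne hQ2ne),
      Polynomial.rootMultiplicity_mul (mul_ne_zero (RatFunc.denom_ne_zero Z) Ppoly_ne)] at hmul
    -- rootMultiplicity of Q' is 1
    have hmQ : rootMultiplicity (-1/3 : ℚ) Qpoly = 0 := by
      apply rootMultiplicity_eq_zero
      rw [Polynomial.IsRoot, Qpoly_eval]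
      norm_num
    have h93fac : (9 * Polynomial.X + 3 : ℚ[X]) = Polynomial.C 9 * (Polynomial.X - Polynomial.C (-1/3)) := by
      rw [mul_sub, ← Polynomial.C_mul]
      norm_num [map_ofNat]
    have hm93 : rootMultiplicity (-1/3 : ℚ) (9 * Polynomial.X + 3) = 1 := by
      rw [h93fac, Polynomial.rootMultiplicity_mul (by
        rw [← h93fac]; exact h93)]
      rw [Polynomial.rootMultiplicity_X_sub_C_self,
        rootMultiplicity_eq_zero (by simp [Polynomial.IsRoot])]
    have hmQ' : rootMultiplicity (-1/3 : ℚ) Q2poly = 1 := by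
      rw [hQ'def, Polynomial.rootMultiplicity_mul hQ2ne, hmQ, hm93]
    have hmP : 1 ≤ rootMultiplicity (-1/3 : ℚ) Ppoly :=
      (rootMultiplicity_pos Ppoly_ne).mpr Ppoly_eval
    rw [hmQ'] at hmul
    unfold orderAt
    omega
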